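/- Let G^R = (V,E) be a reaction-to-reaction graph on reactions r_1,...,r_r of a CRN such that every edge of G^R belongs to a minimal directed cycle, and every minimal directed cycle {r_{μ(1)},...,r_{μ(l)}} (with edges (r_{μ(i)}, r_{μ(i+1 mod l)})) corresponds to an elementary flux mode, meaning Σ_{i=1}^l (y_{p(μ(i))} − y_{s(μ(i))}) = 0. Then the linear system α_i − α_j = y_{s(j)} − y_{p(i)} for all edges (r_i,r_j) ∈ E, in unknowns α_1,...,α_r ∈ R^m, is consistent, provided the edge set of G^R is a disjoint union of edge sets of such minimal directed cycles. -/

import Mathlib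

namespace CRNAux

variable {σ : Type*} {V : Type*} [AddCommGroup V]

/-- sum of edge weights along the walk `i :: l`. -/
def wsum (w : σ → σ → V) : σ → List σ → V
  | _, [] => 0
  | i, j :: t => w i j + wsum w j t

@[simp] lemma wsum_nil (w : σ → σ → V) (i : σ) : wsum w i [] = 0 := rfl
@[simp] lemma wsum_cons (w : σ → σ → V) (i j : σ) (t : List σ) :
    wsum w i (j :: t) = w i j + wsum w j t := rfl

/-- reachability by a directed walk -/
def Reach (E : σ → σ → Prop) (i j : σ) : Prop :=
  ∃ l : List σ, List.Chain E i l ∧ (i :: l).getLast (List.cons_ne_nil _ _) = j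

lemma Reach.refl (E : σ → σ → Prop) (i : σ) : Reach E i i := ⟨[], List.Chain.nil, rfl⟩

lemma Reach.step {E : σ → σ → Prop} {i j : σ} (h : E i j) : Reach E i j :=
  ⟨[j], by simp [List.Chain, h], rfl⟩

lemma walk_append {E : σ → σ → Prop} (w : σ → σ → V) {x : σ} {l₂ : List σ}
    (l₁ : List σ) (i : σ) (h1 : List.Chain E i l₁)
    (hx : (i :: l₁).getLast (List.cons_ne_nil _ _) = x) (h2 : List.Chain E x l₂) :
    List.Chain E i (l₁ ++ l₂) ∧
      (i :: (l₁ ++ l₂)).getLast (List.cons_ne_nil _ _)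
        = (x :: l₂).getLast (List.cons_ne_nil _ _) ∧
      wsum w i (l₁ ++ l₂) = wsum w i l₁ + wsum w x l₂ := by
  induction l₁ generalizing i with
  | nil =>
    simp only [List.getLast_singleton] at hx
    subst hx
    refine ⟨by simpa using h2, by simp, by simp⟩
  | cons a t ih =>
    rw [List.Chain, List.chain_cons] at h1
    rw [List.getLast_cons (List.cons_ne_nil _ _)] at hx
    obtain ⟨c1, c2, c3⟩ := ih a h1.2 hx
    refine ⟨List.chain_cons.2 ⟨h1.1, c1⟩, ?_, ?_⟩
    · rw [List.cons_append, List.getLast_cons (List.cons_ne_nil _ _)]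
      exact c2
    · simp only [List.cons_append, wsum_cons, c3, add_assoc]

lemma Reach.trans {E : σ → σ → Prop} {i j k : σ} (h1 : Reach E i j) (h2 : Reach E j k) :
    Reach E i k := by
  obtain ⟨l₁, c1, g1⟩ := h1
  obtain ⟨l₂, c2, g2⟩ := h2
  obtain ⟨d1, d2, _⟩ := walk_append (E := E) (fun _ _ => (0 : ℤ)) l₁ i c1 g1 c2
  exact ⟨l₁ ++ l₂, d1, by rw [d2]; exact g2⟩

/-- a chain gives edges between consecutive entries -/
lemma chain_get {E : σ → σ → Prop} : ∀ (l : List σ) (i : σ), List.Chain E i l →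
    ∀ (k : ℕ) (h : k + 1 < (i :: l).length),
      E ((i :: l)[k]'(by omega)) ((i :: l)[k + 1]'h) := by
  intro l
  induction l with
  | nil => intro i _ k h; simp at h
  | cons b t ih =>
    intro i hc k h
    rw [List.Chain, List.chain_cons] at hc
    match k with
    | 0 => exact hc.1
    | k + 1 =>
      have := ih b hc.2 k (by simpa using h)
      simpa using this

lemma wsum_eq_sum (w : σ → σ → V) (d : σ) : ∀ (l : List σ) (i : σ),
    wsum w i l = ∑ a : Fin l.length, w ((i :: l).getD a.1 d) ((i :: l).getD (a.1 + 1) d) := by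
  intro l
  induction l with
  | nil => intro i; simp
  | cons j t ih =>
    intro i
    show w i j + wsum w j t
        = ∑ a : Fin (t.length + 1), w ((i :: j :: t).getD a.1 d) ((i :: j :: t).getD (a.1 + 1) d)
    rw [Fin.sum_univ_succ, ih j]
    simp [List.getD_cons_succ, List.getD_cons_zero, Fin.val_succ]

/-- decomposition of a list with a duplicate -/
lemma dup_split {x : σ} : ∀ {l : List σ}, [x, x].Sublist l →
    ∃ l₁ l₂ l₃, l = l₁ ++ x :: (l₂ ++ x :: l₃) := by
  intro l h
  induction l with
  | nil => simp at h
  | cons a t ih =>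
    cases h with
    | cons _ h' =>
      obtain ⟨l₁, l₂, l₃, rfl⟩ := ih h'
      exact ⟨a :: l₁, l₂, l₃, rfl⟩
    | cons_cons _ h' =>
      obtain ⟨l₂, l₃, rfl⟩ := List.append_of_mem (List.singleton_sublist.1 h')
      exact ⟨[], l₂, l₃, rfl⟩

section closed

variable {E : σ → σ → Prop} {w : σ → σ → V}

/-- weight sum around any closed walk is zero, given it is zero on injective cycles. -/
lemma closed_wsum
    (hcyc : ∀ (l : ℕ) (c : Fin (l + 1) → σ), Function.Injective c →
      (∀ a, E (c a) (c (a + 1))) → ∑ a, w (c a) (c (a + 1)) = 0) :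
    ∀ (n : ℕ) (l : List σ) (i : σ), l.length = n → List.Chain E i l →
      (i :: l).getLast (List.cons_ne_nil _ _) = i → wsum w i l = 0 := by
  intro n
  induction n using Nat.strong_induction_on with
  | _ n IH =>
  intro l i hlen hc hlast
  rcases l with _ | ⟨b, t⟩
  · simp
  set v : List σ := i :: b :: t with hv
  by_cases hnd : v.dropLast.Nodup
  · -- injective cycle case
    have hvlen : v.length = t.length + 2 := by simp [hv]
    have hget : ∀ (k : ℕ), k + 1 < v.length → E (v.getD k i) (v.getD (k + 1) i) := by
      intro k hk
      rw [List.getD_eq_getElem _ _ (by omega), List.getD_eq_getElem _ _ (by omega)]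
      exact chain_get (b :: t) i hc k hk
    have hlast' : v.getD (t.length + 1) i = i := by
      rw [List.getD_eq_getElem _ _ (by omega)]
      have h1 := List.getLast_eq_getElem (l := v) (by rw [hv]; simp)
      rw [hlast] at h1
      have h2 : v.length - 1 = t.length + 1 := by omega
      simp only [h2] at h1
      exact h1.symm
    set c : Fin (t.length + 1) → σ := fun a => v.getD a.1 i with hcdef
    have hinj : Function.Injective c := by
      intro a b hab
      have pa : a.1 < v.length := by have := a.2; omega
      have pb : b.1 < v.length := by have := b.2; omega
      rw [hcdef] at hab
      simp only at hab
      rw [List.getD_eq_getElem _ _ pa, List.getD_eq_getElem _ _ pb] at hab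
      have ha' : a.1 < v.dropLast.length := by
        rw [List.length_dropLast]; have := a.2; omega
      have hb' : b.1 < v.dropLast.length := by
        rw [List.length_dropLast]; have := b.2; omega
      have : v.dropLast[a.1]'ha' = v.dropLast[b.1]'hb' := by
        rw [List.getElem_dropLast, List.getElem_dropLast]; exact hab
      exact Fin.ext (hnd.getElem_inj_iff.1 this)
    have hsucc : ∀ a : Fin (t.length + 1), c (a + 1) = v.getD (a.1 + 1) i := by
      intro a
      by_cases ha : a.1 = t.length
      · have hA : a = Fin.last t.length := Fin.ext (by simpa using ha)
        rw [hA, Fin.last_add_one]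
        show v.getD 0 i = v.getD (t.length + 1) i
        rw [hlast', hv]
        rfl
      · have hA : (a + 1 : Fin (t.length + 1)) = ⟨a.1 + 1, by have := a.2; omega⟩ :=
          Fin.ext (by rw [Fin.val_add_one, if_neg (fun hh : a = Fin.last _ => ha (by rw [hh, Fin.val_last]))])
        rw [hA]
    have hedges : ∀ a : Fin (t.length + 1), E (c a) (c (a + 1)) := by
      intro a
      rw [hsucc a]
      exact hget a.1 (by have := a.2; omega)
    have h0 := hcyc t.length c hinj hedges
    have hws : wsum w i (b :: t) = ∑ a : Fin (t.length + 1), w (c a) (v.getD (a.1 + 1) i) :=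
      wsum_eq_sum w i (b :: t) i
    rw [hws,
      show (∑ a : Fin (t.length + 1), w (c a) (v.getD (a.1 + 1) i))
          = ∑ a, w (c a) (c (a + 1)) from
        Finset.sum_congr rfl (fun a _ => by rw [hsucc a]),
      h0]
  · -- duplicate case: split the walk
    obtain ⟨x, hdup⟩ := List.exists_duplicate_iff_not_nodup.2 hnd
    obtain ⟨l₁, l₂, l₃, hsplit⟩ := dup_split (List.duplicate_iff_sublist.1 hdup)
    have hfull : v = l₁ ++ x :: (l₂ ++ x :: (l₃ ++ [i])) := by
      conv_lhs => rw [← List.dropLast_append_getLast (l := v) (by rw [hv]; simp), hsplit, hlast]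
      simp
    rw [hv] at hfull
    rcases l₁ with _ | ⟨a, u⟩
    · -- first repeated vertex is i itself
      simp only [List.nil_append] at hfull
      obtain ⟨rfl, htail⟩ := List.cons_eq_cons.1 hfull
      try simp only [List.append_eq] at htail
      try simp only [List.append_eq]
      rw [htail] at hc hlen ⊢
      obtain ⟨c1, c2⟩ := (List.isChain_cons_split (l₁ := l₂)).1 hc
      have hn : l₂.length + l₃.length + 2 = n := by
        simp only [List.length_append, List.length_cons, List.length_nil] at hlen
        omega
      have z1 : wsum w i (l₂ ++ [i]) = 0 := by
        refine IH (l₂.length + 1) (by omega) _ i ?_ c1 ?_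
        · simp only [List.length_append, List.length_cons, List.length_nil]
        · simp [List.getLast_cons, List.getLast_append]
      have z2 : wsum w i (l₃ ++ [i]) = 0 := by
        refine IH (l₃.length + 1) (by omega) _ i ?_ c2 ?_
        · simp only [List.length_append, List.length_cons, List.length_nil]
        · simp [List.getLast_cons, List.getLast_append]
      have key := (walk_append w (l₂ ++ [i]) i c1
        (by simp [List.getLast_cons, List.getLast_append]) c2).2.2
      rw [show l₂ ++ i :: (l₃ ++ [i]) = (l₂ ++ [i]) ++ (l₃ ++ [i]) by simp]
      rw [key, z1, z2, add_zero]
    · -- i = a, walk = u ++ x :: (l₂ ++ x :: (l₃ ++ [i]))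
      simp only [List.cons_append] at hfull
      obtain ⟨rfl, htail⟩ := List.cons_eq_cons.1 hfull
      try simp only [List.append_eq] at htail
      try simp only [List.append_eq]
      rw [htail] at hc hlen ⊢
      obtain ⟨c1, c2⟩ := (List.isChain_cons_split (l₁ := u)).1 hc
      obtain ⟨c3, c4⟩ := (List.isChain_cons_split (l₁ := l₂)).1 c2
      have hn : u.length + l₂.length + l₃.length + 3 = n := by
        simp only [List.length_append, List.length_cons, List.length_nil] at hlen
        omega
      have z2 : wsum w x (l₂ ++ [x]) = 0 := by
        refine IH (l₂.length + 1) (by omega) _ x ?_ c3 ?_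
        · simp only [List.length_append, List.length_cons, List.length_nil]
        · simp [List.getLast_cons, List.getLast_append]
      have outer := walk_append w (u ++ [x]) i c1
        (by simp [List.getLast_cons, List.getLast_append]) c4
      have z1 : wsum w i ((u ++ [x]) ++ (l₃ ++ [i])) = 0 := by
        refine IH (u.length + l₃.length + 2) (by omega) _ i ?_ outer.1 ?_
        · simp only [List.length_append, List.length_cons, List.length_nil]
          omega
        · rw [outer.2.1]
          simp [List.getLast_cons, List.getLast_append]
      rw [show u ++ x :: (l₂ ++ x :: (l₃ ++ [i]))
          = (u ++ [x]) ++ ((l₂ ++ [x]) ++ (l₃ ++ [i])) by simp]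
      have c2' : List.Chain E x ((l₂ ++ [x]) ++ (l₃ ++ [i])) := by
        have he : (l₂ ++ [x]) ++ (l₃ ++ [i]) = l₂ ++ x :: (l₃ ++ [i]) := by simp
        rw [he]; exact c2
      have key1 := (walk_append w (u ++ [x]) i c1
        (by simp [List.getLast_cons, List.getLast_append]) c2').2.2
      have key2 := (walk_append w (l₂ ++ [x]) x c3
        (by simp [List.getLast_cons, List.getLast_append]) c4).2.2
      rw [key1, key2, z2, zero_add]
      rw [outer.2.2] at z1
      exact z1

lemma path_indep
    (hcyc : ∀ (l : ℕ) (c : Fin (l + 1) → σ), Function.Injective c →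
      (∀ a, E (c a) (c (a + 1))) → ∑ a, w (c a) (c (a + 1)) = 0)
    {i j : σ} {l₁ l₂ : List σ}
    (h1 : List.Chain E i l₁) (e1 : (i :: l₁).getLast (List.cons_ne_nil _ _) = j)
    (h2 : List.Chain E i l₂) (e2 : (i :: l₂).getLast (List.cons_ne_nil _ _) = j)
    (hback : Reach E j i) :
    wsum w i l₁ = wsum w i l₂ := by
  obtain ⟨b, cb, gb⟩ := hback
  have k1 := walk_append w l₁ i h1 e1 cb
  have k2 := walk_append w l₂ i h2 e2 cb
  have z1 : wsum w i (l₁ ++ b) = 0 :=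
    closed_wsum hcyc (l₁ ++ b).length _ i rfl k1.1 (by rw [k1.2.1]; exact gb)
  have z2 : wsum w i (l₂ ++ b) = 0 :=
    closed_wsum hcyc (l₂ ++ b).length _ i rfl k2.1 (by rw [k2.2.1]; exact gb)
  rw [k1.2.2] at z1
  rw [k2.2.2] at z2
  exact add_right_cancel (z1.trans z2.symm)

lemma exists_potential
    (hrev : ∀ i j, E i j → Reach E j i)
    (hcyc : ∀ (l : ℕ) (c : Fin (l + 1) → σ), Function.Injective c →
      (∀ a, E (c a) (c (a + 1))) → ∑ a, w (c a) (c (a + 1)) = 0) :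
    ∃ α : σ → V, ∀ i j, E i j → α i - α j = w i j := by
  classical
  let s : Setoid σ := ⟨fun a b => Reach E a b ∧ Reach E b a,
    ⟨fun a => ⟨Reach.refl E a, Reach.refl E a⟩, fun h => ⟨h.2, h.1⟩,
     fun h g => ⟨h.1.trans g.1, g.2.trans h.2⟩⟩⟩
  have hrep : ∀ i : σ, Reach E (Quotient.mk s i).out i ∧ Reach E i (Quotient.mk s i).out :=
    fun i => Quotient.mk_out (s := s) i
  have hex : ∀ i : σ, ∃ l : List σ, List.Chain E (Quotient.mk s i).out l ∧
      ((Quotient.mk s i).out :: l).getLast (List.cons_ne_nil _ _) = i :=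
    fun i => (hrep i).1
  choose L hL using hex
  refine ⟨fun i => - wsum w (Quotient.mk s i).out (L i), ?_⟩
  intro i j hij
  have hq : Quotient.mk s i = Quotient.mk s j :=
    Quotient.sound (⟨Reach.step hij, hrev i j hij⟩ : s.r i j)
  show - wsum w (Quotient.mk s i).out (L i) - (- wsum w (Quotient.mk s j).out (L j)) = w i j
  rw [← hq]
  have hLj1 : List.Chain E (Quotient.mk s i).out (L j) := by rw [hq]; exact (hL j).1
  have hLj2 : ((Quotient.mk s i).out :: L j).getLast (List.cons_ne_nil _ _) = j := by
    rw [hq]; exact (hL j).2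
  have hcb : List.Chain E i [j] := by simp [List.Chain, hij]
  have ext := walk_append w (L i) (Quotient.mk s i).out (hL i).1 (hL i).2 hcb
  have hback : Reach E j (Quotient.mk s i).out := by rw [hq]; exact (hrep j).2
  have hpe : wsum w (Quotient.mk s i).out (L j)
      = wsum w (Quotient.mk s i).out (L i ++ [j]) :=
    path_indep hcyc hLj1 hLj2 ext.1 (by rw [ext.2.1]; rfl) hback
  rw [hpe, ext.2.2]
  simp

end closed

end CRNAux

open Fin.NatCast

/-- **Consistency of the translation-complex linear system.**
`E` is the edge relation of a reaction-to-reaction graph on the reactions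
`r_1, ..., r_r` (each with source complex `src k` and product complex
`prod k` in `ℝ^m`).  Assume: every edge belongs to a minimal directed cycle;
every minimal directed cycle `{r_{c 0}, ..., r_{c l}}` (with edges
`(r_{c i}, r_{c (i+1 mod l)})`) corresponds to an elementary flux mode, i.e.
`Σ_i (prod (c i) − src (c i)) = 0`; and the edge set of the graph is a
disjoint union of edge sets of such minimal directed cycles.  Then the linear
system `α_i − α_j = src j − prod i` over all edges `(r_i, r_j)` is
consistent. -/
theorem translation_system_consistent (m r : ℕ)
    (src prod : Fin r → Fin m → ℝ) (E : Fin r → Fin r → Prop)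
    (hedge : ∀ i j, E i j → ∃ (l : ℕ) (c : Fin (l + 1) → Fin r),
      Function.Injective c ∧ (∀ a, E (c a) (c (a + 1))) ∧
      ∃ a, c a = i ∧ c (a + 1) = j)
    (hEFM : ∀ (l : ℕ) (c : Fin (l + 1) → Fin r), Function.Injective c →
      (∀ a, E (c a) (c (a + 1))) → ∑ a, (prod (c a) - src (c a)) = 0)
    (hdisj : ∃ (N : ℕ) (l : Fin N → ℕ) (c : (t : Fin N) → Fin (l t + 1) → Fin r),
      (∀ t, Function.Injective (c t)) ∧
      (∀ i j, E i j ↔ ∃ t a, c t a = i ∧ c t (a + 1) = j) ∧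
      (∀ t₁ t₂ a₁ a₂, c t₁ a₁ = c t₂ a₂ → c t₁ (a₁ + 1) = c t₂ (a₂ + 1) → t₁ = t₂)) :
    ∃ α : Fin r → Fin m → ℝ, ∀ i j, E i j → α i - α j = src j - prod i := by
  classical
  set w : Fin r → Fin r → (Fin m → ℝ) := fun i j => src j - prod i with hw
  have hcyc : ∀ (l : ℕ) (c : Fin (l + 1) → Fin r), Function.Injective c →
      (∀ a, E (c a) (c (a + 1))) → ∑ a, w (c a) (c (a + 1)) = 0 := by
    intro l c hinj he
    have h1 := hEFM l c hinj he
    rw [Finset.sum_sub_distrib] at h1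
    have h2 : ∑ a, w (c a) (c (a + 1))
        = ∑ a : Fin (l + 1), (src (c (a + 1)) - prod (c a)) := rfl
    rw [h2, Finset.sum_sub_distrib]
    have h3 : ∑ a : Fin (l + 1), src (c (a + 1)) = ∑ a : Fin (l + 1), src (c a) :=
      Fintype.sum_bijective (· + 1) (Equiv.addRight (1 : Fin (l + 1))).bijective
        (fun a => src (c (a + 1))) (fun a => src (c a)) (fun a => rfl)
    rw [h3, sub_eq_zero]
    rw [sub_eq_zero] at h1
    exact h1.symm
  have hrev : ∀ i j, E i j → CRNAux.Reach E j i := by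
    intro i j hij
    obtain ⟨l, c, hinj, he, a, ha1, ha2⟩ := hedge i j hij
    have step : ∀ (t : ℕ) (b : Fin (l + 1)), CRNAux.Reach E (c b) (c (b + (t : Fin (l + 1)))) := by
      intro t
      induction t with
      | zero => intro b; simpa using CRNAux.Reach.refl E (c b)
      | succ t ih =>
        intro b
        have h4 := (ih b).trans (CRNAux.Reach.step (he (b + (t : Fin (l + 1)))))
        have h5 : b + ((t : ℕ) + 1 : ℕ) = b + (t : Fin (l + 1)) + 1 := by
          push_cast
          abel
        rw [h5]
        exact h4
    have hl0 : ((l : Fin (l + 1)) + 1) = 0 := by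
      have h6 := Fin.natCast_self (l + 1)
      push_cast at h6
      exact h6
    have h7 : (a + 1) + ((l : ℕ) : Fin (l + 1)) = a := by
      rw [add_assoc, add_comm (1 : Fin (l + 1)), hl0, add_zero]
    have h8 := step l (a + 1)
    rw [h7, ha1, ha2] at h8
    exact h8
  obtain ⟨α, hα⟩ := CRNAux.exists_potential hrev hcyc
  exact ⟨α, fun i j h => hα i j h⟩
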